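/- arXiv:0903.1373 — 2 statements merged into one kernel-verified Lean document; each statement's English description precedes it below -/
import Mathlib

section
/- Let 0 ≤ k ≤ n, let α : Fin k → Fin n be injective, let τ be a permutation of Fin k, and let β : Fin (n-k) → Fin n be any injective map whose range is the complement of the range of α. Then sign⟨α,⃖β⟩ · sign⟨β,⃖(α∘τ)⟩ = (-1)^⌊n/2⌋ · sign τ; in particular this product is independent of the choice of β. -/
/-- The permutation of `Fin n` that lists the values of `α : Fin a → Fin n` in order,
followed by the values of `β : Fin b → Fin n` in reverse order. -/
noncomputable def listPerm {n a b : ℕ} (hab : a + b = n) (α : Fin a → Fin n) (β : Fin b → Fin n)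
    (hα : Function.Injective α) (hβ : Function.Injective β)
    (hd : ∀ s t, α s ≠ β t) : Equiv.Perm (Fin n) :=
  Equiv.ofBijective
    ((Sum.elim α (β ∘ Fin.rev)) ∘ (finSumFinEquiv.symm ∘ Fin.cast hab.symm))
    (by
      have hinj : Function.Injective (Sum.elim α (β ∘ Fin.rev)) :=
        Function.Injective.sumElim hα (hβ.comp Fin.rev_injective)
          (fun s t => hd s (Fin.rev t))
      exact Finite.injective_iff_bijective.mp
        (hinj.comp (finSumFinEquiv.symm.injective.comp (Fin.cast_injective _))))

/-- The unique strictly monotone map `Fin (n-k) → Fin n` whose range is the complement of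
the range of an injective map `J : Fin k → Fin n`. -/
noncomputable def monoCompl {n k : ℕ} (J : Fin k → Fin n) (hJ : Function.Injective J) :
    Fin (n - k) → Fin n :=
  (Finset.univ.image J)ᶜ.orderEmbOfFin (by
    rw [Finset.card_compl, Finset.card_image_of_injective _ hJ, Finset.card_univ,
      Fintype.card_fin, Fintype.card_fin])

theorem monoCompl_injective {n k : ℕ} (J : Fin k → Fin n) (hJ : Function.Injective J) :
    Function.Injective (monoCompl J hJ) :=
  ((Finset.univ.image J)ᶜ.orderEmbOfFin _).injective

theorem monoCompl_ne {n k : ℕ} (J : Fin k → Fin n) (hJ : Function.Injective J) :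
    ∀ s t, monoCompl J hJ s ≠ J t := by
  intro s t h
  have hmem : monoCompl J hJ s ∈ (Finset.univ.image J)ᶜ := Finset.orderEmbOfFin_mem _ _ _
  rw [Finset.mem_compl] at hmem
  exact hmem (h ▸ Finset.mem_image_of_mem J (Finset.mem_univ t))

theorem neg_one_pow_congr' {M : Type*} [Monoid M] [HasDistribNeg M] {m l : ℕ} (h : m % 2 = l % 2) :
    ((-1 : M)) ^ m = (-1) ^ l := by
  rw [← Nat.div_add_mod m 2, ← Nat.div_add_mod l 2, h, pow_add, pow_add, pow_mul, pow_mul,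
    neg_one_sq, one_pow, one_pow]

theorem sign_revPerm : ∀ n, Equiv.Perm.sign (Fin.revPerm : Equiv.Perm (Fin n)) = (-1) ^ (n / 2)
  | 0 => by rw [Subsingleton.elim (Fin.revPerm : Equiv.Perm (Fin 0)) 1]; simp
  | (n + 1) => by
    have ih := sign_revPerm n
    have hdec : (Fin.revPerm : Equiv.Perm (Fin (n + 1))) =
        finRotate (n + 1) *
          (finSuccEquivLast.symm.permCongr (Fin.revPerm : Equiv.Perm (Fin n)).optionCongr) := by
      ext x
      induction x using Fin.lastCases with
      | last =>
        simp [Equiv.Perm.mul_apply, Equiv.permCongr_apply, finSuccEquivLast_last,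
          finRotate_last, Fin.rev_last]
      | cast i =>
        simp only [Fin.revPerm_apply, Equiv.Perm.mul_apply, Equiv.permCongr_apply,
          Equiv.symm_symm, finSuccEquivLast_castSucc, Equiv.optionCongr_apply, Option.map_some,
          finSuccEquivLast_symm_some, finRotate_succ_apply, Fin.revPerm_apply]
        have hi := i.is_lt
        have h1 : 1 % (n + 1) = 1 := Nat.mod_eq_of_lt (by omega)
        rw [Fin.val_add]
        simp only [Fin.val_rev, Fin.coe_castSucc, Fin.val_one', h1]
        rw [Nat.mod_eq_of_lt (by omega)]
        omega
    rw [hdec, map_mul, sign_finRotate, Equiv.Perm.sign_permCongr, Equiv.optionCongr_sign, ih,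
      ← pow_add]
    exact neg_one_pow_congr' (by rcases Nat.even_or_odd n with ⟨q, hq⟩ | ⟨q, hq⟩ <;> subst hq <;> omega)

theorem listPerm_apply_lt {n a b : ℕ} (hab : a + b = n) (α : Fin a → Fin n) (β : Fin b → Fin n)
    (hα : Function.Injective α) (hβ : Function.Injective β) (hd : ∀ s t, α s ≠ β t)
    (x : Fin n) (h : (x : ℕ) < a) :
    listPerm hab α β hα hβ hd x = α ⟨x, h⟩ := by
  have h1 : Fin.cast hab.symm x = Fin.castAdd b ⟨x, h⟩ := rfl
  show Sum.elim α (β ∘ Fin.rev) (finSumFinEquiv.symm (Fin.cast hab.symm x)) = _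
  rw [h1, finSumFinEquiv_symm_apply_castAdd]
  rfl

theorem listPerm_apply_ge {n a b : ℕ} (hab : a + b = n) (α : Fin a → Fin n) (β : Fin b → Fin n)
    (hα : Function.Injective α) (hβ : Function.Injective β) (hd : ∀ s t, α s ≠ β t)
    (x : Fin n) (h : a ≤ (x : ℕ)) :
    listPerm hab α β hα hβ hd x = β ⟨n - 1 - x, by omega⟩ := by
  have hx : (x : ℕ) - a < b := by omega
  have h1 : Fin.cast hab.symm x = Fin.natAdd a ⟨(x : ℕ) - a, hx⟩ := by
    apply Fin.ext; simp; omega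
  have h2 : Fin.rev (⟨(x : ℕ) - a, hx⟩ : Fin b) = ⟨n - 1 - x, by omega⟩ := by
    apply Fin.ext; simp [Fin.val_rev]; omega
  show Sum.elim α (β ∘ Fin.rev) (finSumFinEquiv.symm (Fin.cast hab.symm x)) = _
  rw [h1, finSumFinEquiv_symm_apply_natAdd]
  show β (Fin.rev ⟨(x : ℕ) - a, hx⟩) = _
  rw [h2]

theorem key_lemma {n k : ℕ} (hk : k ≤ n)
    (α : Fin k → Fin n) (hα : Function.Injective α) (τ : Equiv.Perm (Fin k))
    (β : Fin (n - k) → Fin n) (hβ : Function.Injective β)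
    (hd1 : ∀ s t, α s ≠ β t) (hd2 : ∀ s t, β s ≠ (α ∘ τ) t) :
    Equiv.Perm.sign (listPerm (Nat.add_sub_cancel' hk) α β hα hβ hd1) *
    Equiv.Perm.sign (listPerm (Nat.sub_add_cancel hk) β (α ∘ τ) hβ (hα.comp τ.injective) hd2) =
    (-1) ^ (n / 2) * Equiv.Perm.sign τ := by
  set e : Fin k ⊕ Fin (n - k) ≃ Fin n :=
    finSumFinEquiv.trans (finCongr (Nat.add_sub_cancel' hk)) with he
  set τ' : Equiv.Perm (Fin n) := e.permCongr (Equiv.sumCongr τ (Equiv.refl (Fin (n - k)))) with hτ'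
  have hel : ∀ t : Fin k, ((e (Sum.inl t) : Fin n) : ℕ) = (t : ℕ) := by
    intro t; simp [he]
  have her : ∀ s : Fin (n - k), ((e (Sum.inr s) : Fin n) : ℕ) = k + (s : ℕ) := by
    intro s; simp [he]
  have hel' : ∀ (v : ℕ) (hv : v < k), ((e (Sum.inl ⟨v, hv⟩) : Fin n) : ℕ) = v :=
    fun v hv => hel ⟨v, hv⟩
  have her' : ∀ (v : ℕ) (hv : v < n - k), ((e (Sum.inr ⟨v, hv⟩) : Fin n) : ℕ) = k + v :=
    fun v hv => her ⟨v, hv⟩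
  have hτl : ∀ t : Fin k, τ' (e (Sum.inl t)) = e (Sum.inl (τ t)) := by
    intro t
    rw [hτ', Equiv.permCongr_apply, Equiv.symm_apply_apply]
    rfl
  have hτr : ∀ s : Fin (n - k), τ' (e (Sum.inr s)) = e (Sum.inr s) := by
    intro s
    rw [hτ', Equiv.permCongr_apply, Equiv.symm_apply_apply]
    rfl
  have hkey : listPerm (Nat.sub_add_cancel hk) β (α ∘ τ) hβ (hα.comp τ.injective) hd2
      = listPerm (Nat.add_sub_cancel' hk) α β hα hβ hd1 * (τ' * Fin.revPerm) := by
    apply Equiv.ext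
    intro x
    have hxn : (x : ℕ) < n := x.is_lt
    have hrev : ((Fin.rev x : Fin n) : ℕ) = n - 1 - (x : ℕ) := by
      rw [Fin.val_rev]; omega
    simp only [Equiv.Perm.mul_apply, Fin.revPerm_apply]
    by_cases h : (x : ℕ) < n - k
    · have hv : n - 1 - (x : ℕ) - k < n - k := by omega
      have hge : k ≤ ((e (Sum.inr ⟨n - 1 - (x : ℕ) - k, hv⟩) : Fin n) : ℕ) := by
        rw [her']; omega
      rw [listPerm_apply_lt _ _ _ _ _ _ x h,
        show Fin.rev x = e (Sum.inr ⟨n - 1 - (x : ℕ) - k, hv⟩) from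
          Fin.ext (by rw [hrev, her']; omega),
        hτr, listPerm_apply_ge _ _ _ _ _ _ _ hge]
      apply congrArg
      apply Fin.ext
      have h1 := her' (n - 1 - (x : ℕ) - k) hv
      simp only [Fin.val_mk]
      omega
    · have h' : n - k ≤ (x : ℕ) := by omega
      have hv : n - 1 - (x : ℕ) < k := by omega
      rw [listPerm_apply_ge _ _ _ _ _ _ x h',
        show Fin.rev x = e (Sum.inl ⟨n - 1 - (x : ℕ), hv⟩) from
          Fin.ext (by rw [hrev, hel']),
        hτl]
      have hlt : ((e (Sum.inl (τ ⟨n - 1 - (x : ℕ), hv⟩)) : Fin n) : ℕ) < k := by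
        rw [hel]; exact (τ _).is_lt
      rw [listPerm_apply_lt _ _ _ _ _ _ _ hlt]
      simp only [Function.comp_apply]
      apply congrArg
      apply Fin.ext
      simp only [Fin.val_mk]
      rw [hel]
  have hsτ' : Equiv.Perm.sign τ' = Equiv.Perm.sign τ := by
    rw [hτ', Equiv.Perm.sign_permCongr, Equiv.Perm.sign_sumCongr, Equiv.Perm.sign_refl, mul_one]
  have halg : ∀ a b c : ℤˣ, a * (a * (b * c)) = c * b := by
    intro a b c
    rw [← mul_assoc, Int.units_mul_self, one_mul, mul_comm]
  rw [hkey, map_mul, map_mul, hsτ', sign_revPerm]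
  exact halg _ _ _

theorem sign_listPerm_mul_sign_listPerm {n k : ℕ} (hk : k ≤ n)
    (α : Fin k → Fin n) (hα : Function.Injective α) (τ : Equiv.Perm (Fin k))
    (β : Fin (n - k) → Fin n) (hβ : Function.Injective β)
    (hrange : Set.range β = (Set.range α)ᶜ) :
    Equiv.Perm.sign (listPerm (Nat.add_sub_cancel' hk) α β hα hβ
        (fun s t hst => (hrange ▸ Set.mem_range_self t : β t ∈ (Set.range α)ᶜ) ⟨s, hst⟩)) *
    Equiv.Perm.sign (listPerm (Nat.sub_add_cancel hk) β (α ∘ τ) hβ (hα.comp τ.injective)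
        (fun s t hst => (hrange ▸ Set.mem_range_self s : β s ∈ (Set.range α)ᶜ) ⟨τ t, hst.symm⟩)) =
    (-1) ^ (n / 2) * Equiv.Perm.sign τ :=
  key_lemma hk α hα τ β hβ _ _
end

section
/- Laplace expansion: let F be a commutative ring, A an n×n matrix over F, 0 ≤ k ≤ n, and I : Fin k → Fin n strictly monotone. Then det A = ∑ over all strictly monotone J : Fin k → Fin n (equivalently, over all k-element subsets of Fin n via their monotone enumeration) of C_{I,J} · det (A.submatrix I J); and likewise det A = ∑ over all strictly monotone J : Fin k → Fin n of C_{J,I} · det (A.submatrix J I). -/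
attribute [local instance] Classical.propDecidable

/-- The generalized cofactor `C_{I,J}`: the signed determinant of the complementary
submatrix obtained by deleting the rows in `I` and the columns in `J`. -/
noncomputable def cofactor {F : Type*} [CommRing F] {n k : ℕ} (A : Matrix (Fin n) (Fin n) F)
    (I J : Fin k → Fin n) (hI : StrictMono I) (hJ : StrictMono J) : F :=
  (-1 : F) ^ (∑ t, ((I t : ℕ) + 1) + ∑ t, ((J t : ℕ) + 1)) *
    (A.submatrix (monoCompl I hI.injective) (monoCompl J hJ.injective)).det

open Equiv Equiv.Perm Finset

section Laplace

variable {n k : ℕ}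

/-- sign equals signAux -/
lemma my_sign_eq_signAux (σ : Perm (Fin n)) : Perm.sign σ = Perm.signAux σ := by
  by_cases h2 : 2 ≤ n
  · have hsurj : Function.Surjective (MonoidHom.mk' Perm.signAux Perm.signAux_mul :
        Perm (Fin n) →* ℤˣ) := by
      intro u
      rcases Int.units_eq_one_or u with rfl | rfl
      · exact ⟨1, Perm.signAux_one n⟩
      · refine ⟨Equiv.swap ⟨0, by omega⟩ ⟨1, by omega⟩, Perm.signAux_swap ?_⟩
        simp [Fin.ext_iff]
    exact (DFunLike.congr_fun (Perm.eq_sign_of_surjective_hom hsurj) σ).symm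
  · have hs : Subsingleton (Fin n) := by
      interval_cases n
      · exact inferInstance
      · exact inferInstance
    have hσ : σ = 1 := Equiv.ext fun a => hs.allEq _ _
    rw [hσ, map_one, Perm.signAux_one]

lemma my_prod_ite {α : Type*} (s : Finset α) (p : α → Prop) [DecidablePred p] :
    (∏ x ∈ s, (if p x then (-1 : ℤˣ) else 1)) = (-1) ^ (s.filter p).card := by
  rw [Finset.prod_ite, Finset.prod_const, Finset.prod_const, one_pow, mul_one]

lemma my_le_apply {I : Fin k → Fin n} (hI : StrictMono I) (t : Fin k) : (t : ℕ) ≤ (I t : ℕ) := by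
  obtain ⟨t, ht⟩ := t
  induction t with
  | zero => exact Nat.zero_le _
  | succ i ih =>
    have h1 : (⟨i, Nat.lt_of_succ_lt ht⟩ : Fin k) < ⟨i + 1, ht⟩ := by simp [Fin.lt_def]
    have := hI h1
    have := ih (Nat.lt_of_succ_lt ht)
    simp only [Fin.lt_def] at this ⊢
    omega

variable (hk : k ≤ n)

lemma monoCompl_strictMono {J : Fin k → Fin n} (hJ : Function.Injective J) :
    StrictMono (monoCompl J hJ) :=
  (Finset.orderEmbOfFin _ _).strictMono

lemma monoCompl_not_mem {J : Fin k → Fin n} (hJ : Function.Injective J) (s : Fin (n - k)) :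
    monoCompl J hJ s ∉ Finset.univ.image J := by
  have := Finset.orderEmbOfFin_mem ((Finset.univ.image J)ᶜ) (by
    rw [Finset.card_compl, Finset.card_image_of_injective _ hJ, Finset.card_univ,
      Fintype.card_fin, Fintype.card_fin]) s
  rw [Finset.mem_compl] at this
  exact this

/-- block equivalence -/
noncomputable def blockEquiv (J : Fin k → Fin n) (hJ : StrictMono J) :
    Fin k ⊕ Fin (n - k) ≃ Fin n :=
  Equiv.ofBijective (Sum.elim J (monoCompl J hJ.injective)) (by
    rw [Fintype.bijective_iff_injective_and_card]
    constructor
    · intro x y h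
      match x, y with
      | Sum.inl a, Sum.inl b => simp only [Sum.elim_inl] at h; exact congrArg _ (hJ.injective h)
      | Sum.inr a, Sum.inr b =>
        simp only [Sum.elim_inr] at h
        exact congrArg _ ((monoCompl_strictMono hJ.injective).injective h)
      | Sum.inl a, Sum.inr b =>
        simp only [Sum.elim_inl, Sum.elim_inr] at h
        exact absurd (h ▸ Finset.mem_image_of_mem J (Finset.mem_univ a))
          (monoCompl_not_mem hJ.injective b)
      | Sum.inr a, Sum.inl b =>
        simp only [Sum.elim_inl, Sum.elim_inr] at h
        exact absurd (h ▸ Finset.mem_image_of_mem J (Finset.mem_univ b))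
          (monoCompl_not_mem hJ.injective a)
    · simp only [Fintype.card_sum, Fintype.card_fin]
      omega)


noncomputable def canon : Fin n ≃ Fin k ⊕ Fin (n - k) :=
  (finCongr (Nat.add_sub_cancel' hk).symm).trans finSumFinEquiv.symm

def posL (t : Fin k) : Fin n := ⟨t, lt_of_lt_of_le t.isLt hk⟩

def posR (s : Fin (n - k)) : Fin n := ⟨k + s, by omega⟩

lemma canon_posL (t : Fin k) : canon hk (posL hk t) = Sum.inl t := by
  have h : (finCongr (Nat.add_sub_cancel' hk).symm) (posL hk t) = Fin.castAdd (n - k) t := rfl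
  simp [canon, h]

lemma canon_posR (s : Fin (n - k)) : canon hk (posR hk s) = Sum.inr s := by
  have h : (finCongr (Nat.add_sub_cancel' hk).symm) (posR hk s) = Fin.natAdd k s := rfl
  simp [canon, h]

lemma posL_or_posR (a : Fin n) : (∃ t, a = posL hk t) ∨ (∃ s, a = posR hk s) := by
  by_cases h : (a : ℕ) < k
  · exact Or.inl ⟨⟨a, h⟩, by simp [posL]⟩
  · refine Or.inr ⟨⟨a - k, by omega⟩, ?_⟩
    simp only [posR]
    ext
    simp
    omega

/-- the basic permutation associated to a strictly monotone map -/
noncomputable def rho (J : Fin k → Fin n) (hJ : StrictMono J) : Perm (Fin n) :=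
  (canon hk).trans (blockEquiv hk J hJ)

lemma rho_posL (J : Fin k → Fin n) (hJ : StrictMono J) (t : Fin k) :
    rho hk J hJ (posL hk t) = J t := by
  simp [rho, canon_posL, blockEquiv]

lemma rho_posR (J : Fin k → Fin n) (hJ : StrictMono J) (s : Fin (n - k)) :
    rho hk J hJ (posR hk s) = monoCompl J hJ.injective s := by
  simp [rho, canon_posR, blockEquiv]


lemma filt_lt_card {N : ℕ} (x : Fin N) :
    (Finset.univ.filter (fun a => a < x)).card = (x : ℕ) := by
  have h : Finset.univ.filter (fun a : Fin N => a < x) = Finset.Iio x := by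
    ext a; simp [Finset.mem_Iio]
  rw [h, Fin.card_Iio]

lemma card_compl_lt {I : Fin k → Fin n} (hI : StrictMono I) (t : Fin k) :
    (Finset.univ.filter fun s : Fin (n - k) => monoCompl I hI.injective s < I t).card
      = (I t : ℕ) - t := by
  classical
  set S := Finset.univ.image I with hS
  -- image part
  have h1 : (S.filter (· < I t)).card = (t : ℕ) := by
    have himg : S.filter (· < I t) = (Finset.univ.filter (· < t)).image I := by
      ext a
      simp only [hS, Finset.mem_filter, Finset.mem_image, Finset.mem_univ, true_and]
      constructor
      · rintro ⟨⟨t', rfl⟩, hlt⟩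
        exact ⟨t', hI.lt_iff_lt.mp hlt, rfl⟩
      · rintro ⟨t', ht', rfl⟩
        exact ⟨⟨t', rfl⟩, hI ht'⟩
    rw [himg, Finset.card_image_of_injective _ hI.injective, filt_lt_card]
  have h2 : (Finset.univ.filter (· < I t) : Finset (Fin n)).card = (I t : ℕ) := filt_lt_card _
  have h3 : ((Finset.univ.filter (· < I t)).filter (· ∈ S)).card
      + ((Finset.univ.filter (· < I t)).filter (· ∉ S)).card
      = (Finset.univ.filter (· < I t) : Finset (Fin n)).card :=
    Finset.card_filter_add_card_filter_not _
  have h4 : (Finset.univ.filter (· < I t)).filter (· ∈ S) = S.filter (· < I t) := by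
    ext a; simp only [Finset.mem_filter, Finset.mem_univ, true_and]; tauto
  have h5 : (Finset.univ.filter (· < I t)).filter (· ∉ S) = Sᶜ.filter (· < I t) := by
    ext a; simp only [Finset.mem_filter, Finset.mem_univ, true_and, Finset.mem_compl]; tauto
  -- bijection with the compl filter
  have h6 : (Finset.univ.filter fun s : Fin (n - k) => monoCompl I hI.injective s < I t).card
      = (Sᶜ.filter (· < I t)).card := by
    apply Finset.card_bij (fun s _ => monoCompl I hI.injective s)
    · intro s hs
      simp only [Finset.mem_filter, Finset.mem_univ, true_and] at hs ⊢
      refine ⟨Finset.mem_compl.mpr (monoCompl_not_mem hI.injective s), hs⟩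
    · intro a ha b hb hab
      exact (monoCompl_strictMono hI.injective).injective hab
    · intro a ha
      simp only [Finset.mem_filter, Finset.mem_compl] at ha
      have hrange : a ∈ Set.range (monoCompl I hI.injective) := by
        have := Finset.range_orderEmbOfFin (Sᶜ) (by
          rw [Finset.card_compl, Finset.card_image_of_injective _ hI.injective,
            Finset.card_univ, Fintype.card_fin, Fintype.card_fin])
        rw [show monoCompl I hI.injective = ⇑(Sᶜ.orderEmbOfFin _) from rfl, this]
        exact Finset.mem_coe.mpr (Finset.mem_compl.mpr ha.1)
      obtain ⟨s, rfl⟩ := hrange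
      exact ⟨s, by simp [ha.2], rfl⟩
  rw [h4, h5] at h3
  omega


lemma prod_filter_card {m : ℕ} (Q : Fin k → Fin m → Prop) [∀ t s, Decidable (Q t s)] :
    (Finset.univ.filter fun p : Fin k × Fin m => Q p.1 p.2).card
      = ∑ t : Fin k, (Finset.univ.filter fun s => Q t s).card := by
  rw [Finset.card_filter, Fintype.sum_prod_type]
  exact Finset.sum_congr rfl fun t _ => (Finset.card_filter _ _).symm

lemma inversions_card (I : Fin k → Fin n) (hI : StrictMono I) :
    ((Perm.finPairsLT n).filter fun x => rho hk I hI x.1 ≤ rho hk I hI x.2).card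
      = (Finset.univ.filter fun p : Fin k × Fin (n - k) =>
          monoCompl I hI.injective p.2 < I p.1).card := by
  symm
  apply Finset.card_bij (fun p _ => (⟨posR hk p.2, posL hk p.1⟩ : Σ _ : Fin n, Fin n))
  · intro p hp
    simp only [Finset.mem_filter, Finset.mem_univ, true_and] at hp
    rw [Finset.mem_filter]
    constructor
    · rw [Perm.mem_finPairsLT]
      show posL hk p.1 < posR hk p.2
      rw [Fin.lt_def]
      show (p.1 : ℕ) < k + p.2
      have := p.1.isLt
      omega
    · show rho hk I hI (posR hk p.2) ≤ rho hk I hI (posL hk p.1)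
      rw [rho_posL, rho_posR]
      exact le_of_lt hp
  · intro p hp q hq h
    have hfst := congrArg (fun y : Σ _ : Fin n, Fin n => (y.1 : ℕ)) h
    have hsnd := congrArg (fun y : Σ _ : Fin n, Fin n => (y.2 : ℕ)) h
    simp only [posR, posL] at hfst hsnd
    exact Prod.ext (Fin.ext hsnd) (Fin.ext (by omega))
  · rintro ⟨x1, x2⟩ hx
    rw [Finset.mem_filter, Perm.mem_finPairsLT] at hx
    obtain ⟨hlt, hle⟩ := hx
    have hlt' : x2 < x1 := hlt
    have hle' : rho hk I hI x1 ≤ rho hk I hI x2 := hle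
    clear hlt hle
    rcases posL_or_posR hk x1 with ⟨t', rfl⟩ | ⟨s', rfl⟩ <;>
      rcases posL_or_posR hk x2 with ⟨t, rfl⟩ | ⟨s, rfl⟩
    · rw [rho_posL, rho_posL] at hle'
      have h1 : t < t' := by
        rw [Fin.lt_def] at hlt' ⊢; exact hlt'
      exact absurd (hI.le_iff_le.mp hle') (not_le.mpr h1)
    · rw [Fin.lt_def] at hlt'
      simp only [posL, posR] at hlt'
      have := t'.isLt
      omega
    · rw [rho_posR, rho_posL] at hle'
      have hne : monoCompl I hI.injective s' ≠ I t := by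
        intro he
        exact monoCompl_not_mem hI.injective s'
          (he ▸ Finset.mem_image_of_mem I (Finset.mem_univ t))
      exact ⟨(t, s'), Finset.mem_filter.mpr ⟨Finset.mem_univ _, lt_of_le_of_ne hle' hne⟩, rfl⟩
    · rw [rho_posR, rho_posR] at hle'
      have h1 : s < s' := by
        rw [Fin.lt_def] at hlt' ⊢
        simp only [posR] at hlt'
        omega
      exact absurd ((monoCompl_strictMono hI.injective).le_iff_le.mp hle') (not_le.mpr h1)

lemma sign_rho (I : Fin k → Fin n) (hI : StrictMono I) :
    Perm.sign (rho hk I hI) = (-1 : ℤˣ) ^ ∑ t : Fin k, ((I t : ℕ) - t) := by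
  rw [my_sign_eq_signAux]
  unfold Perm.signAux
  rw [my_prod_ite]
  rw [inversions_card]
  have hp := prod_filter_card (k := k)
    (fun t (s : Fin (n - k)) => monoCompl I hI.injective s < I t)
  rw [hp]
  congr 1
  exact Finset.sum_congr rfl fun t _ => card_compl_lt hI t


lemma blockEquiv_inl (J : Fin k → Fin n) (hJ : StrictMono J) (t : Fin k) :
    blockEquiv hk J hJ (Sum.inl t) = J t := rfl

lemma blockEquiv_inr (J : Fin k → Fin n) (hJ : StrictMono J) (s : Fin (n - k)) :
    blockEquiv hk J hJ (Sum.inr s) = monoCompl J hJ.injective s := rfl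

/-- the big parametrization map -/
noncomputable def bigMap (I : Fin k → Fin n) (hI : StrictMono I) :
    {J : Fin k → Fin n // StrictMono J} × Perm (Fin k) × Perm (Fin (n - k)) → Perm (Fin n) :=
  fun x => (blockEquiv hk x.1.1 x.1.2).symm.trans
    ((Equiv.sumCongr x.2.1 x.2.2).trans (blockEquiv hk I hI))

lemma bigMap_blockEquiv (I : Fin k → Fin n) (hI : StrictMono I)
    (J : {J : Fin k → Fin n // StrictMono J}) (α : Perm (Fin k)) (β : Perm (Fin (n - k)))
    (x : Fin k ⊕ Fin (n - k)) :
    bigMap hk I hI (J, α, β) (blockEquiv hk J.1 J.2 x)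
      = blockEquiv hk I hI (Equiv.sumCongr α β x) := by
  simp [bigMap]

lemma bigMap_J (I : Fin k → Fin n) (hI : StrictMono I)
    (J : {J : Fin k → Fin n // StrictMono J}) (α : Perm (Fin k)) (β : Perm (Fin (n - k)))
    (t : Fin k) :
    bigMap hk I hI (J, α, β) (J.1 t) = I (α t) := by
  have := bigMap_blockEquiv hk I hI J α β (Sum.inl t)
  rwa [blockEquiv_inl] at this

lemma bigMap_J' (I : Fin k → Fin n) (hI : StrictMono I)
    (J : {J : Fin k → Fin n // StrictMono J}) (α : Perm (Fin k)) (β : Perm (Fin (n - k)))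
    (s : Fin (n - k)) :
    bigMap hk I hI (J, α, β) (monoCompl J.1 J.2.injective s)
      = monoCompl I hI.injective (β s) := by
  have := bigMap_blockEquiv hk I hI J α β (Sum.inr s)
  rwa [blockEquiv_inr] at this

lemma bigMap_eq_mul (I : Fin k → Fin n) (hI : StrictMono I)
    (J : {J : Fin k → Fin n // StrictMono J}) (α : Perm (Fin k)) (β : Perm (Fin (n - k))) :
    bigMap hk I hI (J, α, β)
      = (rho hk I hI) * ((canon hk).symm.permCongr (Equiv.sumCongr α β))
        * (rho hk J.1 J.2)⁻¹ := by
  ext a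
  simp [bigMap, rho, Perm.mul_apply, Equiv.permCongr_apply, Equiv.Perm.inv_def,
    Equiv.symm_trans_apply, Equiv.apply_symm_apply]

lemma sign_bigMap (I : Fin k → Fin n) (hI : StrictMono I)
    (J : {J : Fin k → Fin n // StrictMono J}) (α : Perm (Fin k)) (β : Perm (Fin (n - k))) :
    Perm.sign (bigMap hk I hI (J, α, β))
      = Perm.sign (rho hk I hI) * Perm.sign (rho hk J.1 J.2)
        * (Perm.sign α * Perm.sign β) := by
  rw [bigMap_eq_mul, map_mul, map_mul, Perm.sign_inv, Perm.sign_permCongr, Perm.sign_sumCongr]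
  exact mul_right_comm _ _ _

lemma mem_image_iff_bigMap (I : Fin k → Fin n) (hI : StrictMono I)
    (J : {J : Fin k → Fin n // StrictMono J}) (α : Perm (Fin k)) (β : Perm (Fin (n - k)))
    (a : Fin n) :
    a ∈ Finset.univ.image J.1 ↔ bigMap hk I hI (J, α, β) a ∈ Finset.univ.image I := by
  constructor
  · intro ha
    obtain ⟨t, -, rfl⟩ := Finset.mem_image.mp ha
    rw [bigMap_J]
    exact Finset.mem_image_of_mem _ (Finset.mem_univ _)
  · intro ha
    by_contra hn
    obtain ⟨x, rfl⟩ := (blockEquiv hk J.1 J.2).surjective a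
    match x with
    | Sum.inl t =>
      exact hn (blockEquiv_inl hk J.1 J.2 t ▸ Finset.mem_image_of_mem _ (Finset.mem_univ t))
    | Sum.inr s =>
      rw [blockEquiv_inr, bigMap_J'] at ha
      exact monoCompl_not_mem hI.injective (β s) ha

lemma card_ms : Fintype.card {J : Fin k → Fin n // StrictMono J} = n.choose k := by
  have e : {J : Fin k → Fin n // StrictMono J}
      ≃ {s : Finset (Fin n) // s ∈ Finset.powersetCard k Finset.univ} :=
    { toFun := fun J => ⟨Finset.univ.image J.1, Finset.mem_powersetCard.mpr
        ⟨Finset.subset_univ _, by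
          rw [Finset.card_image_of_injective _ J.2.injective, Finset.card_univ,
            Fintype.card_fin]⟩⟩
      invFun := fun s => ⟨⇑(s.1.orderEmbOfFin (Finset.mem_powersetCard.mp s.2).2),
        (Finset.orderEmbOfFin _ _).strictMono⟩
      left_inv := fun J => Subtype.ext (Finset.orderEmbOfFin_unique _
        (fun x => Finset.mem_image_of_mem _ (Finset.mem_univ x)) J.2).symm
      right_inv := fun s => Subtype.ext (by
        apply Finset.coe_injective
        rw [Finset.coe_image, Finset.coe_univ, Set.image_univ,
          Finset.range_orderEmbOfFin]) }
  rw [Fintype.card_congr e, Fintype.card_coe, Finset.card_powersetCard, Finset.card_univ,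
    Fintype.card_fin]

lemma bigMap_bijective (I : Fin k → Fin n) (hI : StrictMono I) :
    Function.Bijective (bigMap hk I hI) := by
  rw [Fintype.bijective_iff_injective_and_card]
  constructor
  · rintro ⟨J, α, β⟩ ⟨K, α', β'⟩ h
    have him : Finset.univ.image J.1 = Finset.univ.image K.1 := by
      ext a
      rw [mem_image_iff_bigMap hk I hI J α β a, h, ← mem_image_iff_bigMap hk I hI K α' β' a]
    have hcardJ : (Finset.univ.image J.1).card = k := by
      rw [Finset.card_image_of_injective _ J.2.injective, Finset.card_univ, Fintype.card_fin]
    have hJK : J.1 = K.1 := by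
      have h1 := Finset.orderEmbOfFin_unique hcardJ
        (fun x => Finset.mem_image_of_mem J.1 (Finset.mem_univ x)) J.2
      have h2 := Finset.orderEmbOfFin_unique hcardJ (f := K.1)
        (fun x => him ▸ Finset.mem_image_of_mem K.1 (Finset.mem_univ x)) K.2
      exact h1.trans h2.symm
    have hJK' : J = K := Subtype.ext hJK
    subst hJK'
    have hα : α = α' := by
      apply Equiv.ext
      intro t
      apply hI.injective
      rw [← bigMap_J hk I hI J α β t, h, bigMap_J]
    have hβ : β = β' := by
      apply Equiv.ext
      intro s
      apply (monoCompl_strictMono hI.injective).injective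
      rw [← bigMap_J' hk I hI J α β s, h, bigMap_J']
    rw [hα, hβ]
  · rw [Fintype.card_prod, Fintype.card_prod, card_ms, Fintype.card_perm, Fintype.card_perm,
      Fintype.card_perm, Fintype.card_fin, Fintype.card_fin, Fintype.card_fin,
      ← Nat.choose_mul_factorial_mul_factorial hk, mul_assoc]


lemma laplace_core {F : Type*} [CommRing F] (A : Matrix (Fin n) (Fin n) F)
    (I : Fin k → Fin n) (hI : StrictMono I) :
    A.det = ∑ J : {J : Fin k → Fin n // StrictMono J},
      (((Perm.sign (rho hk I hI) * Perm.sign (rho hk J.1 J.2) : ℤˣ) : ℤ) : F) *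
        ((A.submatrix I J.1).det
          * (A.submatrix (monoCompl I hI.injective) (monoCompl J.1 J.2.injective)).det) := by
  rw [Matrix.det_apply']
  rw [← Fintype.sum_bijective _ (bigMap_bijective hk I hI)
    (fun x => (((Perm.sign (bigMap hk I hI x) : ℤ) : F)) * ∏ i, A (bigMap hk I hI x i) i)
    (fun σ => (((Perm.sign σ : ℤ) : F)) * ∏ i, A (σ i) i) (fun x => rfl)]
  rw [Fintype.sum_prod_type]
  refine Finset.sum_congr rfl fun J _ => ?_
  rw [Fintype.sum_prod_type]
  have hterm : ∀ (α : Perm (Fin k)) (β : Perm (Fin (n - k))),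
      (((Perm.sign (bigMap hk I hI (J, α, β)) : ℤ) : F))
          * ∏ i, A (bigMap hk I hI (J, α, β) i) i
        = (((Perm.sign (rho hk I hI) * Perm.sign (rho hk J.1 J.2) : ℤˣ) : ℤ) : F)
          * ((((Perm.sign α : ℤ) : F) * ∏ t, (A.submatrix I J.1) (α t) t)
            * (((Perm.sign β : ℤ) : F)
              * ∏ s, (A.submatrix (monoCompl I hI.injective)
                  (monoCompl J.1 J.2.injective)) (β s) s)) := by
    intro α β
    have hprod : ∏ i, A (bigMap hk I hI (J, α, β) i) i
        = (∏ t, A (I (α t)) (J.1 t))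
          * ∏ s, A (monoCompl I hI.injective (β s)) (monoCompl J.1 J.2.injective s) := by
      rw [← Equiv.prod_comp (blockEquiv hk J.1 J.2)
        (fun i => A (bigMap hk I hI (J, α, β) i) i), Fintype.prod_sum_type]
      congr 1
      · refine Finset.prod_congr rfl fun t _ => ?_
        rw [bigMap_blockEquiv]
        simp only [Equiv.sumCongr_apply, Sum.map_inl, blockEquiv_inl]
      · refine Finset.prod_congr rfl fun s _ => ?_
        rw [bigMap_blockEquiv]
        simp only [Equiv.sumCongr_apply, Sum.map_inr, blockEquiv_inr]
    rw [sign_bigMap, hprod]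
    simp only [Units.val_mul, Int.cast_mul, Matrix.submatrix_apply]
    ring
  rw [Finset.sum_congr rfl fun α _ => Finset.sum_congr rfl fun β _ => hterm α β]
  rw [Matrix.det_apply', Matrix.det_apply', Finset.sum_mul_sum, Finset.mul_sum]
  refine Finset.sum_congr rfl fun α _ => ?_
  rw [Finset.mul_sum]

lemma neg_one_pow_eq {F : Type*} [CommRing F] {I J : Fin k → Fin n}
    (hI : StrictMono I) (hJ : StrictMono J) :
    (-1 : F) ^ (∑ t, ((I t : ℕ) + 1) + ∑ t, ((J t : ℕ) + 1))
      = (-1 : F) ^ (∑ t : Fin k, ((I t : ℕ) - t) + ∑ t : Fin k, ((J t : ℕ) - t)) := by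
  have hI' : ∑ t : Fin k, ((I t : ℕ) - t) + ∑ t : Fin k, (t : ℕ) = ∑ t, (I t : ℕ) := by
    rw [← Finset.sum_add_distrib]
    exact Finset.sum_congr rfl fun t _ => Nat.sub_add_cancel (my_le_apply hI t)
  have hJ' : ∑ t : Fin k, ((J t : ℕ) - t) + ∑ t : Fin k, (t : ℕ) = ∑ t, (J t : ℕ) := by
    rw [← Finset.sum_add_distrib]
    exact Finset.sum_congr rfl fun t _ => Nat.sub_add_cancel (my_le_apply hJ t)
  have hsI : ∑ t : Fin k, ((I t : ℕ) + 1) = ∑ t, (I t : ℕ) + k := by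
    rw [Finset.sum_add_distrib]
    simp
  have hsJ : ∑ t : Fin k, ((J t : ℕ) + 1) = ∑ t, (J t : ℕ) + k := by
    rw [Finset.sum_add_distrib]
    simp
  have key : ∑ t, ((I t : ℕ) + 1) + ∑ t, ((J t : ℕ) + 1)
      = (∑ t : Fin k, ((I t : ℕ) - t) + ∑ t : Fin k, ((J t : ℕ) - t))
        + 2 * (∑ t : Fin k, (t : ℕ) + k) := by omega
  rw [key, pow_add, pow_mul, neg_one_sq, one_pow, mul_one]

lemma sum_dite_strictMono {F : Type*} [AddCommMonoid F]
    (f : ∀ J : Fin k → Fin n, StrictMono J → F) :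
    (∑ J : Fin k → Fin n, if hJ : StrictMono J then f J hJ else 0)
      = ∑ J : {J : Fin k → Fin n // StrictMono J}, f J.1 J.2 := by
  classical
  rw [← Finset.sum_subset
      (Finset.filter_subset (fun J : Fin k → Fin n => StrictMono J) Finset.univ)
      (fun x _ hx => dif_neg (by simpa using hx))]
  rw [Finset.sum_subtype (p := fun J : Fin k → Fin n => StrictMono J) (Finset.univ.filter fun J : Fin k → Fin n => StrictMono J)
    (by simp) (fun J => if hJ : StrictMono J then f J hJ else 0)]
  exact Finset.sum_congr rfl fun J _ => dif_pos J.2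

end Laplace

open Matrix

theorem laplace_expansion {F : Type*} [CommRing F] {n k : ℕ} (hk : k ≤ n)
    (A : Matrix (Fin n) (Fin n) F) (I : Fin k → Fin n) (hI : StrictMono I) :
    (A.det = ∑ J : Fin k → Fin n,
      if hJ : StrictMono J then cofactor A I J hI hJ * (A.submatrix I J).det else 0) ∧
    (A.det = ∑ J : Fin k → Fin n,
      if hJ : StrictMono J then cofactor A J I hJ hI * (A.submatrix J I).det else 0) := by
  have main : ∀ (B : Matrix (Fin n) (Fin n) F),
      B.det = ∑ J : Fin k → Fin n,
        if hJ : StrictMono J then cofactor B I J hI hJ * (B.submatrix I J).det else 0 := by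
    intro B
    rw [sum_dite_strictMono (fun J hJ => cofactor B I J hI hJ * (B.submatrix I J).det)]
    rw [laplace_core hk B I hI]
    refine Finset.sum_congr rfl fun J _ => ?_
    rw [sign_rho, sign_rho]
    unfold cofactor
    rw [neg_one_pow_eq hI J.2]
    simp only [Units.val_mul, Int.cast_mul, Units.val_pow_eq_pow_val, Units.val_neg,
      Units.val_one, Int.cast_pow, Int.cast_neg, Int.cast_one]
    rw [pow_add]
    ring
  refine ⟨main A, ?_⟩
  have h := main Aᵀ
  rw [Matrix.det_transpose] at h
  rw [h]
  refine Finset.sum_congr rfl fun J _ => ?_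
  by_cases hJ : StrictMono J
  · rw [dif_pos hJ, dif_pos hJ]
    have h2 : cofactor Aᵀ I J hI hJ = cofactor A J I hJ hI := by
      unfold cofactor
      rw [add_comm (∑ t, ((I t : ℕ) + 1)) (∑ t, ((J t : ℕ) + 1))]
      congr 1
      rw [show Aᵀ.submatrix (monoCompl I hI.injective) (monoCompl J hJ.injective)
          = (A.submatrix (monoCompl J hJ.injective) (monoCompl I hI.injective))ᵀ from
          (Matrix.transpose_submatrix _ _ _).symm, Matrix.det_transpose]
    rw [h2, show Aᵀ.submatrix I J = (A.submatrix J I)ᵀ from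
      (Matrix.transpose_submatrix _ _ _).symm, Matrix.det_transpose]
  · rw [dif_neg hJ, dif_neg hJ]
end
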